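/- Let s > 0 and let φ₁(t) = C₁(∑_{k=1}^{l} e_k(t)/k^{s+1} + ∑_{k=l+1}^{2l} e_k(t)/k^{s+1/2}) where {e_k} is an orthonormal basis of L²[0,1] and C₁ = C₁(s) normalizes ‖φ₁‖₂ = 1. Then: (i) ‖φ₁‖_{s,2}² = ∑_k k^{2s}⟨φ₁,e_k⟩² ≤ c' for a constant c' depending only on s; (ii) the projection φ₁^{(l)} onto span{e₁,…,e_l} satisfies ‖φ₁ - φ₁^{(l)}‖₂² ≥ c·l^{-2s} for a constant c > 0 depending only on s. -/

import Mathlib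

lemma sum_inv_sq_le' (n : ℕ) :
    ∑ k ∈ Finset.range (n+1), (((k:ℝ)+1)^2)⁻¹ ≤ 2 - ((n:ℝ)+1)⁻¹ := by
  induction n with
  | zero => norm_num
  | succ m ih =>
    rw [Finset.sum_range_succ]
    push_cast
    have h1 : (0:ℝ) < (m:ℝ)+1 := by positivity
    have key : (((m:ℝ)+1+1)^2)⁻¹ ≤ ((m:ℝ)+1)⁻¹ - ((m:ℝ)+1+1)⁻¹ := by
      rw [inv_le_iff_one_le_mul₀ (by positivity)] at *
      field_simp
      nlinarith
    linarith

lemma sum_inv_sq_le (n : ℕ) :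
    ∑ k ∈ Finset.range n, (((k:ℝ)+1)^2)⁻¹ ≤ 2 := by
  cases n with
  | zero => simp
  | succ m =>
    have h := sum_inv_sq_le' m
    have h1 : (0:ℝ) < (m:ℝ)+1 := by positivity
    nlinarith [inv_pos.mpr h1]

/-- Properties of the test function `φ₁ = C₁(∑_{k=1}^l e_k/k^{s+1} + ∑_{k=l+1}^{2l}
e_k/k^{s+1/2})` (here written via its `0`-based coefficient sequence `c`):
(i) `‖φ₁‖_{s,2}² ≤ c'` for a constant `c'` depending only on `s`, and
(ii) `‖φ₁ - φ₁^{(l)}‖₂² ≥ c l^{-2s}` for a constant `c > 0` depending only on `s`. -/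
theorem test_function_properties (s : ℝ) (hs : 0 < s) :
    ∃ c' c : ℝ, 0 < c' ∧ 0 < c ∧
      ∀ (l : ℕ), 1 ≤ l → ∀ C₁ : ℝ, 0 < C₁ →
        ∀ coef : ℕ → ℝ,
          (∀ k, coef k =
            if k < l then C₁ / ((k : ℝ) + 1) ^ (s + 1)
            else if k < 2 * l then C₁ / ((k : ℝ) + 1) ^ (s + 1 / 2)
            else 0) →
          (∑ k ∈ Finset.range (2 * l), (coef k) ^ 2 = 1) →
          (∑ k ∈ Finset.range (2 * l), ((k : ℝ) + 1) ^ (2 * s) * (coef k) ^ 2 ≤ c') ∧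
          (∑ k ∈ Finset.Ico l (2 * l), (coef k) ^ 2 ≥ c * (l : ℝ) ^ (-(2 * s))) := by
  refine ⟨3, (2:ℝ)^(-(2*s+1))/3, by norm_num, by positivity, ?_⟩
  intro l hl C₁ hC₁ coef hcoef hnorm
  have hl0 : (0:ℝ) < l := by exact_mod_cast hl
  -- squares of the coefficients
  have hx : ∀ k : ℕ, (0:ℝ) < (k:ℝ)+1 := fun k => by positivity
  have hx1 : ∀ k : ℕ, (1:ℝ) ≤ (k:ℝ)+1 := fun k => by
    have := Nat.cast_nonneg (α := ℝ) k; linarith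
  have hsq1 : ∀ k, k < l → coef k ^ 2 = C₁^2 / ((k:ℝ)+1)^(2*s+2) := by
    intro k hk
    rw [hcoef k, if_pos hk, div_pow, ← Real.rpow_natCast (((k:ℝ)+1)^(s+1)) 2,
      ← Real.rpow_mul (le_of_lt (hx k))]
    norm_num; ring_nf
  have hsq2 : ∀ k, l ≤ k → k < 2*l → coef k ^ 2 = C₁^2 / ((k:ℝ)+1)^(2*s+1) := by
    intro k hk1 hk2
    rw [hcoef k, if_neg (by omega), if_pos hk2, div_pow,
      ← Real.rpow_natCast (((k:ℝ)+1)^(s+1/2)) 2, ← Real.rpow_mul (le_of_lt (hx k))]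
    norm_num; ring_nf
  -- C₁² ≤ 1
  have hC1le : C₁^2 ≤ 1 := by
    have h0 : coef 0 ^ 2 = C₁^2 := by
      rw [hsq1 0 (by omega)]
      norm_num
    calc C₁^2 = coef 0 ^ 2 := h0.symm
      _ ≤ ∑ k ∈ Finset.range (2*l), coef k ^ 2 :=
          Finset.single_le_sum (fun k _ => sq_nonneg (coef k)) (by simp; omega)
      _ = 1 := hnorm
  -- split the full range
  have hsplit : ∀ f : ℕ → ℝ, ∑ k ∈ Finset.range (2*l), f k
      = ∑ k ∈ Finset.range l, f k + ∑ k ∈ Finset.Ico l (2*l), f k := by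
    intro f
    rw [Finset.range_eq_Ico,
      ← Finset.sum_Ico_consecutive f (Nat.zero_le l) (by omega), ← Finset.range_eq_Ico]
  -- bound on the low part of the norm sum (used for C₁² ≥ 1/3)
  have hlow : ∑ k ∈ Finset.range l, coef k ^ 2 ≤ 2 * C₁^2 := by
    calc ∑ k ∈ Finset.range l, coef k ^ 2
        ≤ ∑ k ∈ Finset.range l, C₁^2 * (((k:ℝ)+1)^2)⁻¹ := by
          apply Finset.sum_le_sum
          intro k hk
          rw [hsq1 k (Finset.mem_range.mp hk), div_eq_mul_inv]
          apply mul_le_mul_of_nonneg_left _ (sq_nonneg C₁)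
          apply inv_anti₀ (by positivity)
          rw [← Real.rpow_natCast ((k:ℝ)+1) 2]
          exact Real.rpow_le_rpow_of_exponent_le (hx1 k) (by push_cast; linarith)
      _ = C₁^2 * ∑ k ∈ Finset.range l, (((k:ℝ)+1)^2)⁻¹ := by rw [Finset.mul_sum]
      _ ≤ C₁^2 * 2 := mul_le_mul_of_nonneg_left (sum_inv_sq_le l) (sq_nonneg C₁)
      _ = 2 * C₁^2 := by ring
  -- bound on the high part of the norm sum
  have hhigh : ∑ k ∈ Finset.Ico l (2*l), coef k ^ 2 ≤ C₁^2 := by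
    have hcard : (Finset.Ico l (2*l)).card = l := by rw [Nat.card_Ico]; omega
    calc ∑ k ∈ Finset.Ico l (2*l), coef k ^ 2
        ≤ (Finset.Ico l (2*l)).card • (C₁^2 / l) := by
          apply Finset.sum_le_card_nsmul
          intro k hk
          obtain ⟨hk1, hk2⟩ := Finset.mem_Ico.mp hk
          rw [hsq2 k hk1 hk2]
          apply div_le_div_of_nonneg_left (sq_nonneg C₁) hl0
          calc (l:ℝ) ≤ (k:ℝ)+1 := by
                have : (l:ℝ) ≤ (k:ℝ) := by exact_mod_cast hk1
                linarith
            _ = ((k:ℝ)+1)^(1:ℝ) := (Real.rpow_one _).symm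
            _ ≤ ((k:ℝ)+1)^(2*s+1) := Real.rpow_le_rpow_of_exponent_le (hx1 k) (by linarith)
      _ = C₁^2 := by
          rw [hcard, nsmul_eq_mul]
          field_simp
  -- C₁² ≥ 1/3
  have hC1ge : 1/3 ≤ C₁^2 := by
    have : (1:ℝ) ≤ 3 * C₁^2 := by
      rw [← hnorm, hsplit]
      linarith
    linarith
  constructor
  · -- part (i)
    rw [hsplit]
    have h1 : ∑ k ∈ Finset.range l, ((k:ℝ)+1)^(2*s) * coef k ^ 2 ≤ 2 * C₁^2 := by
      calc ∑ k ∈ Finset.range l, ((k:ℝ)+1)^(2*s) * coef k ^ 2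
          = ∑ k ∈ Finset.range l, C₁^2 * (((k:ℝ)+1)^2)⁻¹ := by
            apply Finset.sum_congr rfl
            intro k hk
            rw [hsq1 k (Finset.mem_range.mp hk),
              show (2*s+2 : ℝ) = 2*s + (2:ℕ) by norm_num,
              Real.rpow_add (hx k), Real.rpow_natCast]
            have hp1 : ((k:ℝ)+1)^(2*s) ≠ 0 := ne_of_gt (Real.rpow_pos_of_pos (hx k) _)
            have hp2 : ((k:ℝ)+1)^(2:ℕ) ≠ 0 := ne_of_gt (pow_pos (hx k) 2)
            field_simp
        _ = C₁^2 * ∑ k ∈ Finset.range l, (((k:ℝ)+1)^2)⁻¹ := by rw [Finset.mul_sum]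
        _ ≤ C₁^2 * 2 := mul_le_mul_of_nonneg_left (sum_inv_sq_le l) (sq_nonneg C₁)
        _ = 2 * C₁^2 := by ring
    have h2 : ∑ k ∈ Finset.Ico l (2*l), ((k:ℝ)+1)^(2*s) * coef k ^ 2 ≤ C₁^2 := by
      have hcard : (Finset.Ico l (2*l)).card = l := by rw [Nat.card_Ico]; omega
      calc ∑ k ∈ Finset.Ico l (2*l), ((k:ℝ)+1)^(2*s) * coef k ^ 2
          ≤ (Finset.Ico l (2*l)).card • (C₁^2 / l) := by
            apply Finset.sum_le_card_nsmul
            intro k hk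
            obtain ⟨hk1, hk2⟩ := Finset.mem_Ico.mp hk
            rw [hsq2 k hk1 hk2, Real.rpow_add (hx k) (2*s) 1, Real.rpow_one]
            have hp1 : ((k:ℝ)+1)^(2*s) ≠ 0 := ne_of_gt (Real.rpow_pos_of_pos (hx k) _)
            have heq : ((k:ℝ)+1)^(2*s) * (C₁^2 / (((k:ℝ)+1)^(2*s) * ((k:ℝ)+1)))
                = C₁^2 / ((k:ℝ)+1) := by
              field_simp
            rw [heq]
            apply div_le_div_of_nonneg_left (sq_nonneg C₁) hl0
            have : (l:ℝ) ≤ (k:ℝ) := by exact_mod_cast hk1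
            linarith
        _ = C₁^2 := by rw [hcard, nsmul_eq_mul]; field_simp
    linarith
  · -- part (ii)
    have hcard : (Finset.Ico l (2*l)).card = l := by rw [Nat.card_Ico]; omega
    have key : (l:ℝ) * (C₁^2 / ((2*l:ℝ))^(2*s+1)) ≤ ∑ k ∈ Finset.Ico l (2*l), coef k ^ 2 := by
      have := Finset.card_nsmul_le_sum (Finset.Ico l (2*l)) (fun k => coef k ^ 2)
        (C₁^2 / ((2*l:ℝ))^(2*s+1)) ?_
      · rwa [hcard, nsmul_eq_mul] at this
      · intro k hk
        obtain ⟨hk1, hk2⟩ := Finset.mem_Ico.mp hk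
        rw [hsq2 k hk1 hk2]
        apply div_le_div_of_nonneg_left (sq_nonneg C₁) (by positivity)
        apply Real.rpow_le_rpow (le_of_lt (hx k)) _ (by linarith)
        have : (k:ℝ) + 1 ≤ 2*l := by
          have : (k:ℝ) ≤ 2*l - 1 := by
            have : k ≤ 2*l - 1 := by omega
            have h' : (k:ℝ) ≤ ((2*l - 1 : ℕ):ℝ) := by exact_mod_cast this
            calc (k:ℝ) ≤ ((2*l-1:ℕ):ℝ) := h'
              _ ≤ 2*(l:ℝ) - 1 := by
                push_cast [Nat.cast_sub (by omega : 1 ≤ 2*l)]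
                norm_num
          linarith
        exact this
    refine le_trans ?_ key
    -- (2l)^(2s+1) = 2^(2s+1) l^(2s+1), and l / l^(2s+1) = l^(-2s)
    have h2l : ((2*l:ℝ))^(2*s+1) = (2:ℝ)^(2*s+1) * (l:ℝ)^(2*s+1) := by
      rw [Real.mul_rpow (by norm_num) (le_of_lt hl0)]
    have hll : (l:ℝ) / (l:ℝ)^(2*s+1) = (l:ℝ)^(-(2*s)) := by
      rw [div_eq_iff (by positivity), ← Real.rpow_add hl0]
      norm_num
    rw [h2l]
    have : (l:ℝ) * (C₁^2 / ((2:ℝ)^(2*s+1) * (l:ℝ)^(2*s+1)))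
        = C₁^2 * ((2:ℝ)^(2*s+1))⁻¹ * ((l:ℝ) / (l:ℝ)^(2*s+1)) := by
      field_simp
    rw [this, hll, Real.rpow_neg (by norm_num : (0:ℝ) ≤ 2), div_eq_mul_inv]
    apply mul_le_mul_of_nonneg_right _ (Real.rpow_nonneg (le_of_lt hl0) _)
    rw [mul_comm ((2:ℝ)^(2*s+1))⁻¹ (3:ℝ)⁻¹]
    apply mul_le_mul_of_nonneg_right _ (by positivity)
    linarith
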